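/- Let r > 0, α > 0, L ∈ ℕ, ω = 2πL, and let f : ℝ → ℝ be f(x) = (1 + cos(ωx/r))/(2ω^α). Let f̂ : ℝ → ℝ be continuous with finite crossing number Cr(ω^α f̂) < 2L. Then (1/(2r)) ∫_{−r}^{r} (f(x) − f̂(x))² dx ≥ (π/16) · (2L − Cr(ω^α f̂)) / ω^{2α+1}. -/

import Mathlib

open Real MeasureTheory

/-- Two reals `x, y` are on the same piece of the partition `I_g` iff the indicator
`𝟙(g ≥ 1/2)` is constant on the closed interval between them. The equivalence classes of
this relation are exactly the maximal intervals on which `𝟙(g ≥ 1/2)` is constant. -/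
def SameSide (g : ℝ → ℝ) (x y : ℝ) : Prop :=
  ∀ z ∈ Set.uIcc x y, ((1 / 2 : ℝ) ≤ g z ↔ (1 / 2 : ℝ) ≤ g x)

lemma sameSide_equivalence (g : ℝ → ℝ) : Equivalence (SameSide g) := by
  constructor
  · intro x z hz
    rw [Set.uIcc_self, Set.mem_singleton_iff] at hz
    rw [hz]
  · intro x y h z hz
    rw [Set.uIcc_comm] at hz
    exact (h z hz).trans (h y Set.right_mem_uIcc).symm
  · intro x y z h1 h2 w hw
    rcases Set.uIcc_subset_uIcc_union_uIcc hw with hw1 | hw2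
    · exact h1 w hw1
    · exact (h2 w hw2).trans (h1 y Set.right_mem_uIcc)

lemma sameSide_iff_quot (g : ℝ → ℝ) (a b : ℝ) :
    Quot.mk (SameSide g) a = Quot.mk (SameSide g) b ↔ SameSide g a b := by
  rw [Quot.eq]
  exact (sameSide_equivalence g).eqvGen_iff

lemma quot_convex (g : ℝ → ℝ) {a b c : ℝ} (hab : a ≤ b) (hbc : b ≤ c)
    (h : Quot.mk (SameSide g) a = Quot.mk (SameSide g) c) :
    Quot.mk (SameSide g) a = Quot.mk (SameSide g) b := by
  rw [sameSide_iff_quot] at h ⊢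
  intro z hz
  exact h z (Set.uIcc_subset_uIcc Set.left_mem_uIcc
    (Set.mem_uIcc.2 (Or.inl ⟨hab, hbc⟩)) hz)

lemma cos_sign_aux (j : ℤ) {s : ℝ} (h0 : 0 ≤ s) (h1 : s ≤ π / 2) :
    0 ≤ Real.cos (2 * j * π + s) ∧ Real.cos (2 * j * π + (π / 2 + s)) ≤ 0 ∧
    Real.cos (2 * j * π + (π + s)) ≤ 0 ∧ 0 ≤ Real.cos (2 * j * π + (π + (π / 2 + s))) := by
  have hπ := Real.pi_pos
  have hs : 0 ≤ Real.sin s := Real.sin_nonneg_of_nonneg_of_le_pi h0 (by linarith)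
  have hc : 0 ≤ Real.cos s := Real.cos_nonneg_of_mem_Icc ⟨by linarith, h1⟩
  have e : ∀ y : ℝ, Real.cos (2 * j * π + y) = Real.cos y := fun y => by
    rw [show 2 * (j:ℝ) * π + y = y + j * (2 * π) by ring, Real.cos_add_int_mul_two_pi]
  have e2 : Real.cos (π / 2 + s) = -Real.sin s := by
    rw [Real.cos_add]; simp
  have e3 : Real.cos (π + s) = -Real.cos s := by
    rw [show π + s = s + π by ring, Real.cos_add_pi]
  have e4 : Real.cos (π + (π / 2 + s)) = Real.sin s := by
    rw [show π + (π / 2 + s) = (π / 2 + s) + π by ring, Real.cos_add_pi, e2]; ring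
  refine ⟨?_, ?_, ?_, ?_⟩ <;> rw [e]
  · exact hc
  · rw [e2]; linarith
  · rw [e3]; linarith
  · rw [e4]; exact hs

lemma integral_cos_sq_quarter {ω r : ℝ} (hω : 0 < ω) (hr : 0 < r) (n : ℤ) :
    ∫ x in (n * (π * r / (2 * ω)))..(n * (π * r / (2 * ω)) + π * r / (2 * ω)),
      Real.cos (ω * x / r) ^ 2 = π * r / (4 * ω) := by
  have hπ := Real.pi_pos
  have hc : (ω / r) ≠ 0 := by positivity
  have hrw : ∀ x : ℝ, ω * x / r = (ω / r) * x := fun x => by ring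
  simp only [hrw]
  rw [intervalIntegral.integral_comp_mul_left (fun y => Real.cos y ^ 2) hc]
  have e1 : ω / r * (n * (π * r / (2 * ω))) = n * π / 2 := by field_simp
  have e2 : ω / r * (n * (π * r / (2 * ω)) + π * r / (2 * ω)) = ((n:ℝ) + 1) * π / 2 := by
    field_simp
  have key : ∀ m : ℤ, Real.cos ((m:ℝ) * π / 2) * Real.sin ((m:ℝ) * π / 2) = 0 := by
    intro m
    have h2 := Real.sin_two_mul ((m:ℝ) * π / 2)
    rw [show (2:ℝ) * ((m:ℝ) * π / 2) = (m:ℝ) * π by ring, Real.sin_int_mul_pi] at h2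
    linear_combination (-(1:ℝ)/2) * h2
  have s1 := key n
  have s2 := key (n + 1)
  push_cast at s2
  rw [e1, e2, integral_cos_sq, s1, s2, smul_eq_mul]
  field_simp
  ring

lemma quarter_bound {r α ω : ℝ} (hr : 0 < r) (hω0 : 0 < ω) {fhat : ℝ → ℝ}
    (hcont : Continuous fhat) (n : ℤ) {u : ℝ} (hu : u = n * (π * r / (2 * ω)))
    (hpt : ∀ x ∈ Set.Icc u (u + π * r / (2 * ω)),
      |Real.cos (ω * x / r) / (2 * ω ^ α)| ≤
        |(1 + Real.cos (ω * x / r)) / (2 * ω ^ α) - fhat x|) :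
    π * r / (16 * ω * (ω ^ α) ^ 2) ≤
      ∫ x in u..(u + π * r / (2 * ω)),
        ((1 + Real.cos (ω * x / r)) / (2 * ω ^ α) - fhat x) ^ 2 := by
  have hπ := Real.pi_pos
  have hωα : (0:ℝ) < ω ^ α := Real.rpow_pos_of_pos hω0 α
  have hq0 : (0:ℝ) < π * r / (2 * ω) := by positivity
  have hle : u ≤ u + π * r / (2 * ω) := by linarith
  have hc1 : Continuous fun x : ℝ => Real.cos (ω * x / r) :=
    Real.continuous_cos.comp ((continuous_const.mul continuous_id).div_const r)
  have hφ : Continuous fun x : ℝ => ((1 + Real.cos (ω * x / r)) / (2 * ω ^ α) - fhat x) ^ 2 :=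
    (((continuous_const.add hc1).div_const _).sub hcont).pow 2
  have hψ : Continuous fun x : ℝ => (Real.cos (ω * x / r) / (2 * ω ^ α)) ^ 2 :=
    (hc1.div_const _).pow 2
  have mono := intervalIntegral.integral_mono_on (μ := volume) hle
    (hψ.intervalIntegrable u _) (hφ.intervalIntegrable u _) (fun x hx => by
      have h := hpt x hx
      calc (Real.cos (ω * x / r) / (2 * ω ^ α)) ^ 2
          = |Real.cos (ω * x / r) / (2 * ω ^ α)| ^ 2 := (sq_abs _).symm
        _ ≤ |(1 + Real.cos (ω * x / r)) / (2 * ω ^ α) - fhat x| ^ 2 :=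
            pow_le_pow_left₀ (abs_nonneg _) h 2
        _ = ((1 + Real.cos (ω * x / r)) / (2 * ω ^ α) - fhat x) ^ 2 := sq_abs _)
  refine le_trans ?_ mono
  have e : ∀ x : ℝ, (Real.cos (ω * x / r) / (2 * ω ^ α)) ^ 2
      = (1 / (2 * ω ^ α)) ^ 2 * Real.cos (ω * x / r) ^ 2 := fun x => by ring
  simp only [e]
  rw [intervalIntegral.integral_const_mul, hu, integral_cos_sq_quarter hω0 hr n]
  have heq : (1 / (2 * ω ^ α)) ^ 2 * (π * r / (4 * ω)) = π * r / (16 * ω * (ω ^ α) ^ 2) := by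
    field_simp; ring
  rw [heq]
lemma pt_bound_pos {W c v : ℝ} (hW : 0 < W) (hc : 0 ≤ c) (hg : W * v < 1 / 2) :
    |c / (2 * W)| ≤ |(1 + c) / (2 * W) - v| := by
  have hv : v < 1 / (2 * W) := by rw [lt_div_iff₀ (by positivity)]; nlinarith
  have e : (1 + c) / (2 * W) - 1 / (2 * W) = c / (2 * W) := by ring
  have h1 : c / (2 * W) ≤ (1 + c) / (2 * W) - v := by linarith
  have h0 : 0 ≤ c / (2 * W) := by positivity
  rw [abs_of_nonneg h0, abs_of_nonneg (le_trans h0 h1)]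
  exact h1

lemma pt_bound_neg {W c v : ℝ} (hW : 0 < W) (hc : c ≤ 0) (hg : 1 / 2 ≤ W * v) :
    |c / (2 * W)| ≤ |(1 + c) / (2 * W) - v| := by
  have hv : 1 / (2 * W) ≤ v := by rw [div_le_iff₀ (by positivity)]; nlinarith
  have e : (1 + c) / (2 * W) - 1 / (2 * W) = c / (2 * W) := by ring
  have h1 : (1 + c) / (2 * W) - v ≤ c / (2 * W) := by linarith
  have h0 : c / (2 * W) ≤ 0 := div_nonpos_of_nonpos_of_nonneg hc (by positivity)
  rw [abs_of_nonpos h0, abs_of_nonpos (h1.trans h0)]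
  linarith


/-- The crossing number `Cr(g)`: the number of maximal intervals on which the indicator
`𝟙(g ≥ 1/2)` is constant, i.e. the number of equivalence classes of `SameSide g`
(`Nat.card` is `0` when there are infinitely many classes). -/
noncomputable def crossingNumber (g : ℝ → ℝ) : ℕ :=
  Nat.card (Quot (SameSide g))

set_option maxHeartbeats 1000000 in
/-- **Oscillation lower bound.** Let `ω = 2πL`, `f(x) = (1 + cos(ωx/r))/(2ω^α)`, and let
`f̂` be continuous with finite crossing number `Cr(ω^α f̂) < 2L`. Then
`(1/(2r)) ∫_{-r}^{r} (f - f̂)² ≥ (π/16) (2L - Cr(ω^α f̂)) / ω^{2α+1}`. -/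
theorem oscillation_lower_bound (r α : ℝ) (hr : 0 < r) (hα : 0 < α)
    (L : ℕ) (hL : 1 ≤ L) (ω : ℝ) (hω : ω = 2 * π * (L : ℝ))
    (f : ℝ → ℝ) (hf : ∀ x, f x = (1 + Real.cos (ω * x / r)) / (2 * ω ^ α))
    (fhat : ℝ → ℝ) (hcont : Continuous fhat)
    (hfin : Finite (Quot (SameSide (fun x => ω ^ α * fhat x))))
    (hcr : crossingNumber (fun x => ω ^ α * fhat x) < 2 * L) :
    1 / (2 * r) * ∫ x in (-r)..r, (f x - fhat x) ^ 2 ≥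
      π / 16 * ((2 * (L : ℝ) - (crossingNumber (fun x => ω ^ α * fhat x) : ℝ)) /
        ω ^ (2 * α + 1)) := by
  classical
  have hπ := Real.pi_pos
  have hL0 : (0:ℝ) < (L:ℝ) := by exact_mod_cast hL
  have hω0 : 0 < ω := by rw [hω]; positivity
  have hωα : (0:ℝ) < ω ^ α := Real.rpow_pos_of_pos hω0 α
  set g : ℝ → ℝ := fun x => ω ^ α * fhat x with hg
  set N := crossingNumber g with hNdef
  set q : ℝ := π * r / (2 * ω) with hqdef
  have hq0 : 0 < q := by rw [hqdef]; positivity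
  set X : ℕ → ℝ := fun k => (k : ℝ) * (π * r / ω) - r with hXdef
  have hrω : 2 * (L:ℝ) * (π * r / ω) = r := by
    rw [hω]; field_simp
  have hX0 : X 0 = -r := by simp [hXdef]
  have hXtop : X (4 * L) = r := by
    simp only [hXdef]; push_cast; nlinarith [hrω]
  have hstep : ∀ k : ℕ, X (k + 1) = X k + (q + q) := by
    intro k; simp only [hXdef, hqdef]; push_cast; ring
  have hmono : ∀ i j : ℕ, i ≤ j → X i ≤ X j := by
    intro i j hij
    simp only [hXdef]
    have hij' : (i:ℝ) ≤ (j:ℝ) := by exact_mod_cast hij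
    have hpr : (0:ℝ) < π * r / ω := by positivity
    nlinarith
  have hθX : ∀ k : ℕ, ω * X k / r = (k:ℝ) * π - 2 * (L:ℝ) * π := by
    intro k; simp only [hXdef]; rw [hω]; field_simp
  have hqω : ω * q / r = π / 2 := by rw [hqdef]; field_simp
  have hXq : ∀ k : ℕ, X k = (((2 * (k:ℤ) - 4 * (L:ℤ)) : ℤ) : ℝ) * q := by
    intro k; simp only [hXdef, hqdef]; push_cast; rw [hω]; field_simp; ring
  -- quotient infrastructure
  haveI : Fintype (Quot (SameSide g)) := Fintype.ofFinite _
  have hNcard : N = Fintype.card (Quot (SameSide g)) := by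
    rw [hNdef, crossingNumber, Nat.card_eq_fintype_card]
  have hN1 : 1 ≤ N := by
    rw [hNcard]
    exact Fintype.card_pos_iff.mpr ⟨Quot.mk _ 0⟩
  set S : Finset ℕ := (Finset.range (4 * L)).filter
      (fun k => SameSide g (X k) (X (k + 1))) with hSdef
  set C : Finset ℕ := (Finset.range (4 * L)).filter
      (fun k => ¬ SameSide g (X k) (X (k + 1))) with hCdef
  have hSC : S.card + C.card = 4 * L := by
    rw [hSdef, hCdef, Finset.card_filter_add_card_filter_not, Finset.card_range]
  have hCbound : C.card ≤ N - 1 := by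
    have key : ∀ i j : ℕ, i ∈ C → j ∈ C → i < j →
        Quot.mk (SameSide g) (X (i + 1)) = Quot.mk (SameSide g) (X (j + 1)) → False := by
      intro i j hi hj hij hQ
      rw [hCdef, Finset.mem_filter] at hj
      have h1 : Quot.mk (SameSide g) (X (i + 1)) = Quot.mk (SameSide g) (X j) :=
        quot_convex g (hmono (i+1) j hij) (hmono j (j+1) (Nat.le_succ j)) hQ
      exact hj.2 ((sameSide_iff_quot g _ _).mp (h1.symm.trans hQ))
    have himg : ∀ k ∈ C, Quot.mk (SameSide g) (X (k + 1)) ∈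
        (Finset.univ.erase (Quot.mk (SameSide g) (X 0))) := by
      intro k hk
      rw [Finset.mem_erase]
      refine ⟨?_, Finset.mem_univ _⟩
      intro hQ
      rw [hCdef, Finset.mem_filter] at hk
      have h0 : Quot.mk (SameSide g) (X 0) = Quot.mk (SameSide g) (X k) :=
        quot_convex g (hmono 0 k (Nat.zero_le k)) (hmono k (k+1) (Nat.le_succ k)) hQ.symm
      exact hk.2 ((sameSide_iff_quot g _ _).mp (h0.symm.trans hQ.symm))
    have hinj : Set.InjOn (fun k => Quot.mk (SameSide g) (X (k + 1))) C := by
      intro i hi j hj hij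
      by_contra hne
      rcases Nat.lt_or_ge i j with h | h
      · exact key i j hi hj h hij
      · exact key j i hj hi (lt_of_le_of_ne h (Ne.symm hne)) hij.symm
    have hcard := Finset.card_le_card_of_injOn _ himg hinj
    rw [Finset.card_erase_of_mem (Finset.mem_univ _), Finset.card_univ] at hcard
    omega
  have hScard : 4 * L + 1 ≤ S.card + N := by omega
  -- continuity
  have hc1 : Continuous fun x : ℝ => Real.cos (ω * x / r) :=
    Real.continuous_cos.comp ((continuous_const.mul continuous_id).div_const r)
  have hfc : Continuous f := by
    have hfe : f = fun x => (1 + Real.cos (ω * x / r)) / (2 * ω ^ α) := funext hf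
    rw [hfe]; exact (continuous_const.add hc1).div_const _
  have hφc : Continuous fun x => (f x - fhat x) ^ 2 := (hfc.sub hcont).pow 2
  -- segment bound
  have hseg : ∀ k ∈ S, π * r / (16 * ω * (ω ^ α) ^ 2) ≤
      ∫ x in X k..X (k + 1), (f x - fhat x) ^ 2 := by
    intro k hk
    rw [hSdef, Finset.mem_filter] at hk
    obtain ⟨hkr, hss⟩ := hk
    have hab : X k ≤ X (k + 1) := hmono k (k+1) (Nat.le_succ k)
    have hside : ∀ z ∈ Set.Icc (X k) (X (k + 1)),
        ((1/2:ℝ) ≤ g z ↔ (1/2:ℝ) ≤ g (X k)) := by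
      intro z hz
      exact hss z (by rwa [Set.uIcc_of_le hab])
    obtain ⟨u, n, hu, hlo, hhi, hsgn⟩ :
        ∃ (u : ℝ) (n : ℤ), u = (n : ℝ) * q ∧ X k ≤ u ∧ u + q ≤ X (k + 1) ∧
          (∀ x ∈ Set.Icc u (u + q),
            |Real.cos (ω * x / r) / (2 * ω ^ α)| ≤
              |(1 + Real.cos (ω * x / r)) / (2 * ω ^ α) - fhat x|) := by
      have hbnd : ∀ u : ℝ, X k ≤ u → ∀ x ∈ Set.Icc u (u + q), u + q ≤ X (k+1) →
          x ∈ Set.Icc (X k) (X (k+1)) := by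
        intro u h1 x hx h2
        exact ⟨le_trans h1 hx.1, le_trans hx.2 h2⟩
      have hs0' : ∀ u x : ℝ, u ≤ x → 0 ≤ ω * (x - u) / r := by
        intro u x h
        exact div_nonneg (mul_nonneg hω0.le (by linarith)) hr.le
      have hs1' : ∀ u x : ℝ, x ≤ u + q → ω * (x - u) / r ≤ π / 2 := by
        intro u x h
        have hxu : x - u ≤ q := by linarith
        calc ω * (x - u) / r ≤ ω * q / r := by gcongr
          _ = π / 2 := hqω
      rcases Nat.even_or_odd k with ⟨t, ht⟩ | ⟨t, ht⟩ <;>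
        by_cases hv : (1/2:ℝ) ≤ g (X k)
      -- even, v true : u = X k + q, sign B (cos ≤ 0)
      · refine ⟨X k + q, 2 * (k:ℤ) - 4 * (L:ℤ) + 1, ?_, by linarith, ?_, ?_⟩
        · rw [hXq k]; push_cast; ring
        · rw [hstep k]; linarith
        · intro x hx
          have hxI : x ∈ Set.Icc (X k) (X (k+1)) :=
            hbnd _ (by linarith) x hx (by rw [hstep k]; linarith)
          have hvx : (1/2:ℝ) ≤ ω ^ α * fhat x := (hside x hxI).mpr hv
          have h2 : ω * x / r =
              2 * (((t:ℤ) - (L:ℤ) : ℤ) : ℝ) * π + (π / 2 + ω * (x - (X k + q)) / r) := by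
            subst ht
            simp only [hXdef, hqdef]
            rw [hω]
            push_cast
            field_simp
            ring
          have hcos : Real.cos (ω * x / r) ≤ 0 := by
            rw [h2]
            exact (cos_sign_aux ((t:ℤ) - (L:ℤ)) (hs0' _ x hx.1) (hs1' _ x hx.2)).2.1
          exact pt_bound_neg hωα hcos hvx
      -- even, v false : u = X k, sign A (cos ≥ 0)
      · refine ⟨X k, 2 * (k:ℤ) - 4 * (L:ℤ), hXq k, le_refl _, ?_, ?_⟩
        · rw [hstep k]; linarith
        · intro x hx
          have hxI : x ∈ Set.Icc (X k) (X (k+1)) :=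
            hbnd _ (le_refl _) x hx (by rw [hstep k]; linarith)
          have hvx : ω ^ α * fhat x < 1/2 := by
            have := (hside x hxI)
            have hnx : ¬ ((1/2:ℝ) ≤ g x) := fun hc => hv (this.mp hc)
            exact not_le.mp hnx
          have h2 : ω * x / r =
              2 * (((t:ℤ) - (L:ℤ) : ℤ) : ℝ) * π + ω * (x - X k) / r := by
            subst ht
            simp only [hXdef]
            rw [hω]
            push_cast
            field_simp
            ring
          have hcos : 0 ≤ Real.cos (ω * x / r) := by
            rw [h2]
            exact (cos_sign_aux ((t:ℤ) - (L:ℤ)) (hs0' _ x hx.1) (hs1' _ x hx.2)).1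
          exact pt_bound_pos hωα hcos hvx
      -- odd, v true : u = X k, sign C (cos ≤ 0)
      · refine ⟨X k, 2 * (k:ℤ) - 4 * (L:ℤ), hXq k, le_refl _, ?_, ?_⟩
        · rw [hstep k]; linarith
        · intro x hx
          have hxI : x ∈ Set.Icc (X k) (X (k+1)) :=
            hbnd _ (le_refl _) x hx (by rw [hstep k]; linarith)
          have hvx : (1/2:ℝ) ≤ ω ^ α * fhat x := (hside x hxI).mpr hv
          have h2 : ω * x / r =
              2 * (((t:ℤ) - (L:ℤ) : ℤ) : ℝ) * π + (π + ω * (x - X k) / r) := by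
            subst ht
            simp only [hXdef]
            rw [hω]
            push_cast
            field_simp
            ring
          have hcos : Real.cos (ω * x / r) ≤ 0 := by
            rw [h2]
            exact (cos_sign_aux ((t:ℤ) - (L:ℤ)) (hs0' _ x hx.1) (hs1' _ x hx.2)).2.2.1
          exact pt_bound_neg hωα hcos hvx
      -- odd, v false : u = X k + q, sign D (cos ≥ 0)
      · refine ⟨X k + q, 2 * (k:ℤ) - 4 * (L:ℤ) + 1, ?_, by linarith, ?_, ?_⟩
        · rw [hXq k]; push_cast; ring
        · rw [hstep k]; linarith
        · intro x hx
          have hxI : x ∈ Set.Icc (X k) (X (k+1)) :=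
            hbnd _ (by linarith) x hx (by rw [hstep k]; linarith)
          have hvx : ω ^ α * fhat x < 1/2 := by
            have := (hside x hxI)
            have hnx : ¬ ((1/2:ℝ) ≤ g x) := fun hc => hv (this.mp hc)
            exact not_le.mp hnx
          have h2 : ω * x / r =
              2 * (((t:ℤ) - (L:ℤ) : ℤ) : ℝ) * π + (π + (π / 2 + ω * (x - (X k + q)) / r)) := by
            subst ht
            simp only [hXdef, hqdef]
            rw [hω]
            push_cast
            field_simp
            ring
          have hcos : 0 ≤ Real.cos (ω * x / r) := by
            rw [h2]
            exact (cos_sign_aux ((t:ℤ) - (L:ℤ)) (hs0' _ x hx.1) (hs1' _ x hx.2)).2.2.2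
          exact pt_bound_pos hωα hcos hvx
    -- now conclude the segment bound from the quarter bound
    have hu' : u = (n : ℝ) * (π * r / (2 * ω)) := by rw [hu, hqdef]
    have hsgn' : ∀ x ∈ Set.Icc u (u + π * r / (2 * ω)),
        |Real.cos (ω * x / r) / (2 * ω ^ α)| ≤
          |(1 + Real.cos (ω * x / r)) / (2 * ω ^ α) - fhat x| := by
      rw [← hqdef]; exact hsgn
    have hqb := quarter_bound (α := α) hr hω0 hcont n hu' hsgn'
    rw [← hqdef] at hqb
    refine le_trans hqb ?_
    have hfe : ∀ x : ℝ, (f x - fhat x) ^ 2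
        = ((1 + Real.cos (ω * x / r)) / (2 * ω ^ α) - fhat x) ^ 2 := fun x => by rw [hf x]
    simp only [hfe]
    exact intervalIntegral.integral_mono_interval hlo (by linarith) hhi
      (ae_of_all _ (fun x => sq_nonneg _))
      (((((continuous_const.add hc1).div_const _).sub hcont).pow 2).intervalIntegrable _ _)
  -- summation
  have hint : ∀ k, k < 4 * L →
      IntervalIntegrable (fun x => (f x - fhat x) ^ 2) volume (X k) (X (k + 1)) :=
    fun k _ => hφc.intervalIntegrable _ _
  have hsum : ∫ x in (-r)..r, (f x - fhat x) ^ 2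
      = ∑ k ∈ Finset.range (4 * L), ∫ x in X k..X (k + 1), (f x - fhat x) ^ 2 := by
    rw [← hX0, ← hXtop]
    exact (intervalIntegral.sum_integral_adjacent_intervals hint).symm
  set c : ℝ := π * r / (16 * ω * (ω ^ α) ^ 2) with hcdef
  have hc0 : 0 ≤ c := by rw [hcdef]; positivity
  have htot : (S.card : ℝ) * c ≤ ∫ x in (-r)..r, (f x - fhat x) ^ 2 := by
    rw [hsum]
    calc (S.card : ℝ) * c = ∑ _k ∈ S, c := by rw [Finset.sum_const, nsmul_eq_mul]
      _ ≤ ∑ k ∈ S, ∫ x in X k..X (k + 1), (f x - fhat x) ^ 2 := Finset.sum_le_sum hseg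
      _ ≤ ∑ k ∈ Finset.range (4 * L), ∫ x in X k..X (k + 1), (f x - fhat x) ^ 2 := by
          apply Finset.sum_le_sum_of_subset_of_nonneg (Finset.filter_subset _ _)
          intro k hk _
          exact intervalIntegral.integral_nonneg (hmono k (k+1) (Nat.le_succ k))
            (fun x _ => sq_nonneg _)
  have hpow : ω ^ (2 * α + 1) = (ω ^ α) ^ 2 * ω := by
    rw [Real.rpow_add hω0, Real.rpow_one]
    congr 1
    rw [sq, ← Real.rpow_add hω0]
    congr 1
    ring
  have hcardR : 4 * (L:ℝ) + 1 - N ≤ (S.card : ℝ) := by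
    have h := hScard
    have h2 : ((4 * L + 1 : ℕ) : ℝ) ≤ ((S.card + N : ℕ) : ℝ) := Nat.cast_le.mpr h
    push_cast at h2
    linarith
  rw [ge_iff_le, hpow]
  have hkey : π / 16 * ((2 * (L:ℝ) - N) / ((ω ^ α) ^ 2 * ω))
      ≤ 1 / (2 * r) * ((4 * (L:ℝ) + 1 - N) * c) := by
    have heq : 1 / (2 * r) * ((4 * (L:ℝ) + 1 - N) * c)
        - π / 16 * ((2 * (L:ℝ) - N) / ((ω ^ α) ^ 2 * ω))
        = ((N:ℝ) + 1) * π / (32 * ω * (ω ^ α) ^ 2) := by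
      rw [hcdef]
      field_simp
      ring
    have hpos : (0:ℝ) ≤ ((N:ℝ) + 1) * π / (32 * ω * (ω ^ α) ^ 2) := by positivity
    linarith
  refine le_trans hkey ?_
  have h1 : (4 * (L:ℝ) + 1 - N) * c ≤ (S.card : ℝ) * c :=
    mul_le_mul_of_nonneg_right hcardR hc0
  calc 1 / (2 * r) * ((4 * (L:ℝ) + 1 - N) * c)
      ≤ 1 / (2 * r) * ((S.card : ℝ) * c) := by
        apply mul_le_mul_of_nonneg_left h1 (by positivity)
    _ ≤ 1 / (2 * r) * ∫ x in (-r)..r, (f x - fhat x) ^ 2 := by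
        apply mul_le_mul_of_nonneg_left htot (by positivity)
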